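/- Let T be a lattice triangle contained in the closed positive quadrant ℝ²_{≥0} that does not contain the origin. Suppose no side of T lies on a coordinate axis, or at most one side lies on a single coordinate axis. Then the quantity 2·Area(T) − ℓ_x(T) − ℓ_y(T) is non-negative, where ℓ_x(T) (resp. ℓ_y(T)) is the lattice length of T ∩ {y = 0} (resp. T ∩ {x = 0}) if that intersection is a segment, and 0 otherwise. -/

import Mathlib

open MeasureTheory

/-- The lattice length of `T ∩ {y = 0}`: the number of lattice points on it
minus one (`0` if the intersection has at most one lattice point). -/
noncomputable def latLenX (T : Set (ℝ × ℝ)) : ℕ :=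
  Set.ncard {t : ℤ | ((t : ℝ), (0 : ℝ)) ∈ T} - 1

/-- The lattice length of `T ∩ {x = 0}`. -/
noncomputable def latLenY (T : Set (ℝ × ℝ)) : ℕ :=
  Set.ncard {t : ℤ | ((0 : ℝ), (t : ℝ)) ∈ T} - 1

open Pointwise


lemma mem_triangle {p q r x : ℝ × ℝ} :
    x ∈ convexHull ℝ ({p, q, r} : Set (ℝ × ℝ)) ↔
    ∃ α β γ : ℝ, 0 ≤ α ∧ 0 ≤ β ∧ 0 ≤ γ ∧ α + β + γ = 1 ∧
      α * p.1 + β * q.1 + γ * r.1 = x.1 ∧ α * p.2 + β * q.2 + γ * r.2 = x.2 := by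
  rw [show ({p, q, r} : Set (ℝ × ℝ)) = insert p {q, r} from rfl,
    convexHull_insert ⟨q, by simp⟩, convexHull_pair]
  simp only [mem_convexJoin, Set.mem_singleton_iff, exists_eq_left]
  constructor
  · rintro ⟨z, ⟨σ, τ, hσ, hτ, hστ, rfl⟩, ⟨α, β, hα, hβ, hαβ, rfl⟩⟩
    exact ⟨α, β * σ, β * τ, hα, by positivity, by positivity, by nlinarith,
      by simp [Prod.fst_add, Prod.smul_fst]; ring, by simp; ring⟩
  · rintro ⟨α, β, γ, hα, hβ, hγ, habc, h1, h2⟩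
    by_cases hbg : β + γ = 0
    · refine ⟨q, left_mem_segment ℝ q r, 1, 0, by norm_num, le_refl _, by ring, ?_⟩
      have hβ0 : β = 0 := by linarith
      have hγ0 : γ = 0 := by linarith
      have hα1 : α = 1 := by linarith
      subst hβ0 hγ0 hα1
      ext <;> simp <;> linarith
    · have hbgpos : 0 < β + γ := lt_of_le_of_ne (by linarith) (Ne.symm hbg)
      refine ⟨(β / (β + γ)) • q + (γ / (β + γ)) • r,
        ⟨β / (β + γ), γ / (β + γ), by positivity, by positivity, by field_simp, rfl⟩,
        α, β + γ, hα, le_of_lt hbgpos, by linarith, ?_⟩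
      ext <;> simp [Prod.fst_add, Prod.smul_fst] <;> field_simp <;> nlinarith



def stdTri : Set (ℝ × ℝ) := {x | 0 ≤ x.1 ∧ 0 ≤ x.2 ∧ x.1 + x.2 ≤ 1}

lemma convex_stdTri : Convex ℝ stdTri := by
  intro x hx y hy a b ha hb hab
  simp only [stdTri, Set.mem_setOf_eq, Prod.fst_add, Prod.snd_add, Prod.smul_fst,
    Prod.smul_snd, smul_eq_mul] at *
  refine ⟨by nlinarith [hx.1, hy.1], by nlinarith [hx.2.1, hy.2.1], by nlinarith⟩

lemma stdTri_eq : convexHull ℝ {((0:ℝ),(0:ℝ)), (1,0), (0,1)} = stdTri := by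
  apply le_antisymm
  · apply convexHull_min _ convex_stdTri
    rintro x hx
    simp only [Set.mem_insert_iff, Set.mem_singleton_iff] at hx
    rcases hx with rfl | rfl | rfl <;> simp [stdTri]
  · intro x hx
    obtain ⟨h1, h2, h3⟩ := hx
    exact mem_triangle.mpr ⟨1 - x.1 - x.2, x.1, x.2, by linarith, h1, h2, by ring,
      by norm_num, by norm_num⟩



def stdTri' : Set (ℝ × ℝ) := {x | x.1 ≤ 1 ∧ x.2 ≤ 1 ∧ 1 ≤ x.1 + x.2}

lemma vol_line : volume {x : ℝ × ℝ | x.1 + x.2 = 1} = 0 := by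
  have hm : MeasurableSet {x : ℝ × ℝ | x.1 + x.2 = 1} :=
    (isClosed_eq (by fun_prop) continuous_const).measurableSet
  rw [Measure.volume_eq_prod, Measure.prod_apply hm]
  have : ∀ a : ℝ, (Prod.mk a ⁻¹' {x : ℝ × ℝ | x.1 + x.2 = 1}) = {1 - a} := by
    intro a; ext y; simp [Set.mem_singleton_iff, eq_comm]; constructor <;> intro h <;> linarith
  simp [this]

lemma measurable_stdTri : MeasurableSet stdTri := by
  have : IsClosed stdTri := by
    apply IsClosed.inter (isClosed_le continuous_const continuous_fst)
    exact IsClosed.inter (isClosed_le continuous_const continuous_snd)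
      (isClosed_le (continuous_fst.add continuous_snd) continuous_const)
  exact this.measurableSet

lemma measurable_stdTri' : MeasurableSet stdTri' := by
  have : IsClosed stdTri' := by
    apply IsClosed.inter (isClosed_le continuous_fst continuous_const)
    exact IsClosed.inter (isClosed_le continuous_snd continuous_const)
      (isClosed_le continuous_const (continuous_fst.add continuous_snd))
  exact this.measurableSet

lemma union_eq : stdTri ∪ stdTri' = Set.Icc ((0:ℝ),(0:ℝ)) (1,1) := by
  ext x
  simp only [stdTri, stdTri', Set.mem_union, Set.mem_setOf_eq, Set.mem_Icc, Prod.le_def]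
  constructor
  · rintro (⟨h1,h2,h3⟩|⟨h1,h2,h3⟩) <;> exact ⟨⟨by linarith, by linarith⟩, ⟨by linarith, by linarith⟩⟩
  · rintro ⟨⟨h1,h2⟩,⟨h3,h4⟩⟩
    rcases le_total (x.1 + x.2) 1 with h | h
    · exact Or.inl ⟨h1, h2, h⟩
    · exact Or.inr ⟨h3, h4, h⟩

lemma vol_Icc11 : volume (Set.Icc ((0:ℝ),(0:ℝ)) (1,1)) = 1 := by
  rw [Set.Icc_prod_eq, Measure.volume_eq_prod, Measure.prod_prod, Real.volume_Icc]
  norm_num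

lemma vol_stdTri'_eq : volume stdTri' = volume stdTri := by
  have hL : stdTri' = ((1:ℝ),(1:ℝ)) +ᵥ
      ((Matrix.toLin (Module.Basis.finTwoProd ℝ) (Module.Basis.finTwoProd ℝ) !![(-1:ℝ),0;0,-1]) '' stdTri) := by
    ext y
    simp only [Set.mem_vadd_set, Set.mem_image, Matrix.toLin_finTwoProd_apply, stdTri, stdTri',
      Set.mem_setOf_eq]
    constructor
    · rintro ⟨h1, h2, h3⟩
      refine ⟨(y.1 - 1, y.2 - 1), ⟨(1 - y.1, 1 - y.2), ⟨show (0:ℝ) ≤ 1 - y.1 by linarith,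
        show (0:ℝ) ≤ 1 - y.2 by linarith, show (1:ℝ) - y.1 + (1 - y.2) ≤ 1 by linarith⟩,
        by simp only [Matrix.toLin_finTwoProd_apply, Prod.mk.injEq]; constructor <;> ring⟩, ?_⟩
      show ((1:ℝ),(1:ℝ)) + (y.1 - 1, y.2 - 1) = y
      simp [Prod.ext_iff]
    · rintro ⟨z, ⟨x, ⟨h1, h2, h3⟩, rfl⟩, rfl⟩
      show (((1:ℝ),(1:ℝ)) + _).1 ≤ 1 ∧ (((1:ℝ),(1:ℝ)) + _).2 ≤ 1 ∧
        1 ≤ (((1:ℝ),(1:ℝ)) + _).1 + (((1:ℝ),(1:ℝ)) + _).2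
      simp only [Prod.fst_add, Prod.snd_add]
      norm_num
      exact ⟨by linarith, by linarith, by linarith⟩
  rw [hL, measure_vadd, Measure.addHaar_image_linearMap]
  rw [LinearMap.det_toLin, Matrix.det_fin_two_of]
  norm_num

lemma vol_stdTri : volume stdTri = ENNReal.ofReal (1/2) := by
  have h1 : volume (stdTri ∪ stdTri') + volume (stdTri ∩ stdTri') = volume stdTri + volume stdTri' :=
    measure_union_add_inter _ measurable_stdTri'
  have h2 : volume (stdTri ∩ stdTri') = 0 := by
    apply measure_mono_null _ vol_line
    rintro x ⟨⟨_,_,h3⟩,⟨_,_,h6⟩⟩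
    exact le_antisymm h3 h6
  rw [union_eq, vol_Icc11, h2, vol_stdTri'_eq, add_zero] at h1
  have hfin : volume stdTri ≠ ⊤ := by
    intro h
    rw [h] at h1
    simp at h1
  have := congrArg ENNReal.toReal h1
  rw [ENNReal.toReal_add hfin hfin] at this
  simp at this
  rw [← ENNReal.ofReal_toReal hfin]
  congr 1
  linarith



lemma vol_tri0 (u v : ℝ × ℝ) : volume (convexHull ℝ {(0 : ℝ × ℝ), u, v}) =
    ENNReal.ofReal (|u.1 * v.2 - u.2 * v.1| / 2) := by
  set L := Matrix.toLin (Module.Basis.finTwoProd ℝ) (Module.Basis.finTwoProd ℝ) !![u.1, v.1; u.2, v.2] with hLdef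
  have himg : L '' convexHull ℝ {((0:ℝ),(0:ℝ)), (1,0), (0,1)} = convexHull ℝ {(0 : ℝ × ℝ), u, v} := by
    rw [L.image_convexHull]
    congr 1
    rw [Set.image_insert_eq, Set.image_insert_eq, Set.image_singleton]
    congr 1
    · show L 0 = 0; exact map_zero L
    congr 1
    · simp [hLdef, Matrix.toLin_finTwoProd_apply]
    · simp [hLdef, Matrix.toLin_finTwoProd_apply]
  rw [← himg, Measure.addHaar_image_linearMap, stdTri_eq, vol_stdTri, hLdef,
    LinearMap.det_toLin, Matrix.det_fin_two_of, ← ENNReal.ofReal_mul (abs_nonneg _)]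
  congr 1
  ring_nf

lemma vol_tri (p q r : ℝ × ℝ) : volume (convexHull ℝ ({p, q, r} : Set (ℝ × ℝ))) =
    ENNReal.ofReal (|(q.1 - p.1) * (r.2 - p.2) - (q.2 - p.2) * (r.1 - p.1)| / 2) := by
  have hset : ({p, q, r} : Set (ℝ × ℝ)) = p +ᵥ ({0, q - p, r - p} : Set (ℝ × ℝ)) := by
    ext x
    simp only [Set.mem_vadd_set, Set.mem_insert_iff, Set.mem_singleton_iff, vadd_eq_add]
    constructor
    · rintro (h | h | h)
      exacts [⟨0, Or.inl rfl, by rw [h]; simp⟩, ⟨q - p, Or.inr (Or.inl rfl), by rw [h]; abel⟩,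
        ⟨r - p, Or.inr (Or.inr rfl), by rw [h]; abel⟩]
    · rintro ⟨z, (h | h | h), rfl⟩ <;> rw [h]
      · simp
      · right; left; abel
      · right; right; abel
  rw [hset, convexHull_vadd, measure_vadd, vol_tri0]
  simp


lemma SX_eq (a b c d : ℤ) (hab : a ≠ b) (hd : 0 < d) :
    {t : ℤ | ((t:ℝ), (0:ℝ)) ∈ convexHull ℝ {((a:ℝ),(0:ℝ)), ((b:ℝ),(0:ℝ)), ((c:ℝ),(d:ℝ))}} =
    Set.Icc (min a b) (max a b) := by
  have hd' : (0:ℝ) < (d:ℝ) := by exact_mod_cast hd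
  ext t
  simp only [Set.mem_setOf_eq, Set.mem_Icc, mem_triangle]
  constructor
  · rintro ⟨α, β, γ, hα, hβ, hγ, hsum, h1, h2⟩
    have e1 : α * (a:ℝ) + β * (b:ℝ) + γ * (c:ℝ) = (t:ℝ) := h1
    have e2 : α * 0 + β * 0 + γ * (d:ℝ) = 0 := h2
    have hγ0 : γ = 0 := by nlinarith
    have e1' : α * (a:ℝ) + β * (b:ℝ) = (t:ℝ) := by rw [hγ0] at e1; linarith [e1]
    have hsum' : α + β = 1 := by rw [hγ0] at hsum; linarith
    have hm : ((min a b : ℤ) : ℝ) ≤ (t : ℝ) := by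
      have h1' : ((min a b : ℤ) : ℝ) ≤ (a:ℝ) := by exact_mod_cast min_le_left a b
      have h2' : ((min a b : ℤ) : ℝ) ≤ (b:ℝ) := by exact_mod_cast min_le_right a b
      have key : (t:ℝ) - ((min a b : ℤ):ℝ) =
          α * ((a:ℝ) - ((min a b : ℤ):ℝ)) + β * ((b:ℝ) - ((min a b : ℤ):ℝ)) := by
        linear_combination (-1) * e1' + ((min a b : ℤ):ℝ) * hsum'
      linarith [key, mul_nonneg hα (sub_nonneg.mpr h1'), mul_nonneg hβ (sub_nonneg.mpr h2')]
    have hM : (t : ℝ) ≤ ((max a b : ℤ) : ℝ) := by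
      have h1' : (a:ℝ) ≤ ((max a b : ℤ) : ℝ) := by exact_mod_cast le_max_left a b
      have h2' : (b:ℝ) ≤ ((max a b : ℤ) : ℝ) := by exact_mod_cast le_max_right a b
      have key : ((max a b : ℤ):ℝ) - (t:ℝ) =
          α * (((max a b : ℤ):ℝ) - (a:ℝ)) + β * (((max a b : ℤ):ℝ) - (b:ℝ)) := by
        linear_combination e1' - ((max a b : ℤ):ℝ) * hsum'
      linarith [key, mul_nonneg hα (sub_nonneg.mpr h1'), mul_nonneg hβ (sub_nonneg.mpr h2')]
    exact ⟨by exact_mod_cast hm, by exact_mod_cast hM⟩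
  · rintro ⟨hmin, hmax⟩
    rcases le_total a b with h | h
    · have h1 : a ≤ t := le_trans (by omega) hmin
      have h2 : t ≤ b := le_trans hmax (by omega)
      have hlt : (a:ℝ) < (b:ℝ) := by exact_mod_cast lt_of_le_of_ne h hab
      have h1' : (a:ℝ) ≤ (t:ℝ) := by exact_mod_cast h1
      have h2' : (t:ℝ) ≤ (b:ℝ) := by exact_mod_cast h2
      refine ⟨((b:ℝ) - t) / ((b:ℝ) - a), ((t:ℝ) - a) / ((b:ℝ) - a), 0,
        div_nonneg (by linarith) (by linarith), div_nonneg (by linarith) (by linarith),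
        le_refl 0,
        by have h0 : (b:ℝ) - a ≠ 0 := by linarith
           rw [add_zero, ← add_div, show (b:ℝ) - t + ((t:ℝ) - a) = (b:ℝ) - a from by ring,
             div_self h0],
        by show ((b:ℝ) - t) / ((b:ℝ) - a) * a + ((t:ℝ) - a) / ((b:ℝ) - a) * b + 0 * c = (t:ℝ)
           have h0 : (b:ℝ) - a ≠ 0 := by linarith
           rw [div_mul_eq_mul_div, div_mul_eq_mul_div, zero_mul, add_zero, ← add_div,
             div_eq_iff h0]
           ring,
        by show ((b:ℝ) - t) / ((b:ℝ) - a) * 0 + ((t:ℝ) - a) / ((b:ℝ) - a) * 0 + 0 * (d:ℝ) = 0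
           ring⟩
    · have h1 : b ≤ t := le_trans (by omega) hmin
      have h2 : t ≤ a := le_trans hmax (by omega)
      have hlt : (b:ℝ) < (a:ℝ) := by exact_mod_cast lt_of_le_of_ne h (Ne.symm hab)
      have h1' : (b:ℝ) ≤ (t:ℝ) := by exact_mod_cast h1
      have h2' : (t:ℝ) ≤ (a:ℝ) := by exact_mod_cast h2
      refine ⟨((t:ℝ) - b) / ((a:ℝ) - b), ((a:ℝ) - t) / ((a:ℝ) - b), 0,
        div_nonneg (by linarith) (by linarith), div_nonneg (by linarith) (by linarith),
        le_refl 0,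
        by have h0 : (a:ℝ) - b ≠ 0 := by linarith
           rw [add_zero, ← add_div, show (t:ℝ) - b + ((a:ℝ) - t) = (a:ℝ) - b from by ring,
             div_self h0],
        by show ((t:ℝ) - b) / ((a:ℝ) - b) * a + ((a:ℝ) - t) / ((a:ℝ) - b) * b + 0 * c = (t:ℝ)
           have h0 : (a:ℝ) - b ≠ 0 := by linarith
           rw [div_mul_eq_mul_div, div_mul_eq_mul_div, zero_mul, add_zero, ← add_div,
             div_eq_iff h0]
           ring,
        by show ((t:ℝ) - b) / ((a:ℝ) - b) * 0 + ((a:ℝ) - t) / ((a:ℝ) - b) * 0 + 0 * (d:ℝ) = 0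
           ring⟩

lemma latLenX_eq (a b c d : ℤ) (hab : a ≠ b) (hd : 0 < d) (T : Set (ℝ × ℝ))
    (hT : T = convexHull ℝ {((a:ℝ),(0:ℝ)), ((b:ℝ),(0:ℝ)), ((c:ℝ),(d:ℝ))}) :
    latLenX T = (b - a).natAbs := by
  unfold latLenX
  rw [hT, SX_eq a b c d hab hd, ← Finset.coe_Icc, Set.ncard_coe_finset, Int.card_Icc]
  omega


lemma tri_rot (p q r : ℝ × ℝ) : ({p, q, r} : Set (ℝ × ℝ)) = {q, r, p} := by
  ext x; simp only [Set.mem_insert_iff, Set.mem_singleton_iff]; tauto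

lemma axis_ptX {p q r x : ℝ × ℝ} (hp : 0 ≤ p.2) (hq : 0 < q.2) (hr : 0 < r.2)
    (hx : x ∈ convexHull ℝ ({p, q, r} : Set (ℝ × ℝ))) (hx2 : x.2 = 0) : x.1 = p.1 := by
  obtain ⟨α, β, γ, hα, hβ, hγ, hsum, h1, h2⟩ := mem_triangle.mp hx
  rw [hx2] at h2
  have hβ0 : β = 0 := by nlinarith [mul_nonneg hα hp, mul_nonneg hβ hq.le, mul_nonneg hγ hr.le]
  have hγ0 : γ = 0 := by nlinarith [mul_nonneg hα hp, mul_nonneg hβ hq.le, mul_nonneg hγ hr.le]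
  have hα1 : α = 1 := by linarith
  rw [hβ0, hγ0, hα1] at h1
  linarith

lemma axis_ptY {p q r x : ℝ × ℝ} (hp : 0 ≤ p.1) (hq : 0 < q.1) (hr : 0 < r.1)
    (hx : x ∈ convexHull ℝ ({p, q, r} : Set (ℝ × ℝ))) (hx1 : x.1 = 0) : x.2 = p.2 := by
  obtain ⟨α, β, γ, hα, hβ, hγ, hsum, h1, h2⟩ := mem_triangle.mp hx
  rw [hx1] at h1
  have hβ0 : β = 0 := by nlinarith [mul_nonneg hα hp, mul_nonneg hβ hq.le, mul_nonneg hγ hr.le]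
  have hγ0 : γ = 0 := by nlinarith [mul_nonneg hα hp, mul_nonneg hβ hq.le, mul_nonneg hγ hr.le]
  have hα1 : α = 1 := by linarith
  rw [hβ0, hγ0, hα1] at h2
  linarith

lemma subsingX {p q r : ℝ × ℝ} (hp : 0 ≤ p.2) (hq : 0 ≤ q.2) (hr : 0 ≤ r.2)
    (hno : ¬ ((p.2 = 0 ∧ q.2 = 0) ∨ (q.2 = 0 ∧ r.2 = 0) ∨ (r.2 = 0 ∧ p.2 = 0))) :
    {t : ℤ | ((t : ℝ), (0 : ℝ)) ∈ convexHull ℝ ({p, q, r} : Set (ℝ × ℝ))}.Subsingleton := by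
  push_neg at hno
  intro s hs t ht
  simp only [Set.mem_setOf_eq] at hs ht
  by_cases hp0 : p.2 = 0
  · have hq' : 0 < q.2 := lt_of_le_of_ne hq (fun h => (hno.1 hp0 h.symm).elim)
    have hr' : 0 < r.2 := lt_of_le_of_ne hr (fun h => (hno.2.2 h.symm hp0).elim)
    have h1 := axis_ptX hp hq' hr' hs rfl
    have h2 := axis_ptX hp hq' hr' ht rfl
    have hst : (s:ℝ) = (t:ℝ) := h1.trans h2.symm
    exact_mod_cast hst
  · by_cases hq0 : q.2 = 0
    · have hr' : 0 < r.2 := lt_of_le_of_ne hr (fun h => (hno.2.1 hq0 h.symm).elim)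
      have hp' : 0 < p.2 := lt_of_le_of_ne hp (Ne.symm hp0)
      rw [tri_rot] at hs ht
      have h1 := axis_ptX hq hr' hp' hs rfl
      have h2 := axis_ptX hq hr' hp' ht rfl
      have hst : (s:ℝ) = (t:ℝ) := h1.trans h2.symm
      exact_mod_cast hst
    · have hp' : 0 < p.2 := lt_of_le_of_ne hp (Ne.symm hp0)
      have hq' : 0 < q.2 := lt_of_le_of_ne hq (Ne.symm hq0)
      rw [tri_rot, tri_rot] at hs ht
      have h1 := axis_ptX hr hp' hq' hs rfl
      have h2 := axis_ptX hr hp' hq' ht rfl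
      have hst : (s:ℝ) = (t:ℝ) := h1.trans h2.symm
      exact_mod_cast hst

lemma subsingY {p q r : ℝ × ℝ} (hp : 0 ≤ p.1) (hq : 0 ≤ q.1) (hr : 0 ≤ r.1)
    (hno : ¬ ((p.1 = 0 ∧ q.1 = 0) ∨ (q.1 = 0 ∧ r.1 = 0) ∨ (r.1 = 0 ∧ p.1 = 0))) :
    {t : ℤ | ((0 : ℝ), (t : ℝ)) ∈ convexHull ℝ ({p, q, r} : Set (ℝ × ℝ))}.Subsingleton := by
  push_neg at hno
  intro s hs t ht
  simp only [Set.mem_setOf_eq] at hs ht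
  by_cases hp0 : p.1 = 0
  · have hq' : 0 < q.1 := lt_of_le_of_ne hq (fun h => (hno.1 hp0 h.symm).elim)
    have hr' : 0 < r.1 := lt_of_le_of_ne hr (fun h => (hno.2.2 h.symm hp0).elim)
    have h1 := axis_ptY hp hq' hr' hs rfl
    have h2 := axis_ptY hp hq' hr' ht rfl
    have hst : (s:ℝ) = (t:ℝ) := h1.trans h2.symm
    exact_mod_cast hst
  · by_cases hq0 : q.1 = 0
    · have hr' : 0 < r.1 := lt_of_le_of_ne hr (fun h => (hno.2.1 hq0 h.symm).elim)
      have hp' : 0 < p.1 := lt_of_le_of_ne hp (Ne.symm hp0)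
      rw [tri_rot] at hs ht
      have h1 := axis_ptY hq hr' hp' hs rfl
      have h2 := axis_ptY hq hr' hp' ht rfl
      have hst : (s:ℝ) = (t:ℝ) := h1.trans h2.symm
      exact_mod_cast hst
    · have hp' : 0 < p.1 := lt_of_le_of_ne hp (Ne.symm hp0)
      have hq' : 0 < q.1 := lt_of_le_of_ne hq (Ne.symm hq0)
      rw [tri_rot, tri_rot] at hs ht
      have h1 := axis_ptY hr hp' hq' hs rfl
      have h2 := axis_ptY hr hp' hq' ht rfl
      have hst : (s:ℝ) = (t:ℝ) := h1.trans h2.symm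
      exact_mod_cast hst

lemma seg_charX {p q : ℝ × ℝ} : segment ℝ p q ⊆ {v : ℝ × ℝ | v.2 = 0} ↔ p.2 = 0 ∧ q.2 = 0 := by
  constructor
  · intro h
    exact ⟨h (left_mem_segment ℝ p q), h (right_mem_segment ℝ p q)⟩
  · rintro ⟨h1, h2⟩ z ⟨a, b, ha, hb, hab, rfl⟩
    show (a • p + b • q).2 = 0
    simp [Prod.snd_add, Prod.smul_snd, h1, h2]

lemma seg_charY {p q : ℝ × ℝ} : segment ℝ p q ⊆ {v : ℝ × ℝ | v.1 = 0} ↔ p.1 = 0 ∧ q.1 = 0 := by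
  constructor
  · intro h
    exact ⟨h (left_mem_segment ℝ p q), h (right_mem_segment ℝ p q)⟩
  · rintro ⟨h1, h2⟩ z ⟨a, b, ha, hb, hab, rfl⟩
    show (a • p + b • q).1 = 0
    simp [Prod.fst_add, Prod.smul_fst, h1, h2]

lemma collinear_horiz {p q r : ℝ × ℝ} (hp : p.2 = 0) (hq : q.2 = 0) (hr : r.2 = 0) :
    Collinear ℝ ({p, q, r} : Set (ℝ × ℝ)) := by
  apply (collinear_iff_of_mem (Set.mem_insert p {q, r})).mpr
  refine ⟨((1:ℝ), (0:ℝ)), fun x hx => ⟨x.1 - p.1, ?_⟩⟩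
  have hx2 : x.2 = 0 := by
    rcases hx with rfl | rfl | rfl <;> assumption
  ext
  · simp
  · simp [hx2, hp]

lemma collinear_vert {p q r : ℝ × ℝ} (hp : p.1 = 0) (hq : q.1 = 0) (hr : r.1 = 0) :
    Collinear ℝ ({p, q, r} : Set (ℝ × ℝ)) := by
  apply (collinear_iff_of_mem (Set.mem_insert p {q, r})).mpr
  refine ⟨((0:ℝ), (1:ℝ)), fun x hx => ⟨x.2 - p.2, ?_⟩⟩
  have hx1 : x.1 = 0 := by
    rcases hx with rfl | rfl | rfl <;> assumption
  ext
  · simp [hx1, hp]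
  · simp

lemma collinear_of_eq {p q r : ℝ × ℝ} (h : p = q) : Collinear ℝ ({p, q, r} : Set (ℝ × ℝ)) := by
  rw [h, Set.insert_idem]
  exact collinear_pair ℝ q r

lemma SY_eq (a b c d : ℤ) (hab : a ≠ b) (hd : 0 < d) :
    {t : ℤ | ((0:ℝ), (t:ℝ)) ∈ convexHull ℝ {((0:ℝ),(a:ℝ)), ((0:ℝ),(b:ℝ)), ((d:ℝ),(c:ℝ))}} =
    Set.Icc (min a b) (max a b) := by
  have hd' : (0:ℝ) < (d:ℝ) := by exact_mod_cast hd
  ext t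
  simp only [Set.mem_setOf_eq, Set.mem_Icc, mem_triangle]
  constructor
  · rintro ⟨α, β, γ, hα, hβ, hγ, hsum, h1, h2⟩
    have e1 : α * (a:ℝ) + β * (b:ℝ) + γ * (c:ℝ) = (t:ℝ) := h2
    have e2 : α * 0 + β * 0 + γ * (d:ℝ) = 0 := h1
    have hγ0 : γ = 0 := by nlinarith
    have e1' : α * (a:ℝ) + β * (b:ℝ) = (t:ℝ) := by rw [hγ0] at e1; linarith [e1]
    have hsum' : α + β = 1 := by rw [hγ0] at hsum; linarith
    have hm : ((min a b : ℤ) : ℝ) ≤ (t : ℝ) := by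
      have h1' : ((min a b : ℤ) : ℝ) ≤ (a:ℝ) := by exact_mod_cast min_le_left a b
      have h2' : ((min a b : ℤ) : ℝ) ≤ (b:ℝ) := by exact_mod_cast min_le_right a b
      have key : (t:ℝ) - ((min a b : ℤ):ℝ) =
          α * ((a:ℝ) - ((min a b : ℤ):ℝ)) + β * ((b:ℝ) - ((min a b : ℤ):ℝ)) := by
        linear_combination (-1) * e1' + ((min a b : ℤ):ℝ) * hsum'
      linarith [key, mul_nonneg hα (sub_nonneg.mpr h1'), mul_nonneg hβ (sub_nonneg.mpr h2')]
    have hM : (t : ℝ) ≤ ((max a b : ℤ) : ℝ) := by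
      have h1' : (a:ℝ) ≤ ((max a b : ℤ) : ℝ) := by exact_mod_cast le_max_left a b
      have h2' : (b:ℝ) ≤ ((max a b : ℤ) : ℝ) := by exact_mod_cast le_max_right a b
      have key : ((max a b : ℤ):ℝ) - (t:ℝ) =
          α * (((max a b : ℤ):ℝ) - (a:ℝ)) + β * (((max a b : ℤ):ℝ) - (b:ℝ)) := by
        linear_combination e1' - ((max a b : ℤ):ℝ) * hsum'
      linarith [key, mul_nonneg hα (sub_nonneg.mpr h1'), mul_nonneg hβ (sub_nonneg.mpr h2')]
    exact ⟨by exact_mod_cast hm, by exact_mod_cast hM⟩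
  · rintro ⟨hmin, hmax⟩
    rcases le_total a b with h | h
    · have h1 : a ≤ t := le_trans (by omega) hmin
      have h2 : t ≤ b := le_trans hmax (by omega)
      have hlt : (a:ℝ) < (b:ℝ) := by exact_mod_cast lt_of_le_of_ne h hab
      have h1' : (a:ℝ) ≤ (t:ℝ) := by exact_mod_cast h1
      have h2' : (t:ℝ) ≤ (b:ℝ) := by exact_mod_cast h2
      refine ⟨((b:ℝ) - t) / ((b:ℝ) - a), ((t:ℝ) - a) / ((b:ℝ) - a), 0,
        div_nonneg (by linarith) (by linarith), div_nonneg (by linarith) (by linarith),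
        le_refl 0,
        by have h0 : (b:ℝ) - a ≠ 0 := by linarith
           rw [add_zero, ← add_div, show (b:ℝ) - t + ((t:ℝ) - a) = (b:ℝ) - a from by ring,
             div_self h0],
        by show ((b:ℝ) - t) / ((b:ℝ) - a) * 0 + ((t:ℝ) - a) / ((b:ℝ) - a) * 0 + 0 * (d:ℝ) = 0
           ring,
        by show ((b:ℝ) - t) / ((b:ℝ) - a) * a + ((t:ℝ) - a) / ((b:ℝ) - a) * b + 0 * c = (t:ℝ)
           have h0 : (b:ℝ) - a ≠ 0 := by linarith
           rw [div_mul_eq_mul_div, div_mul_eq_mul_div, zero_mul, add_zero, ← add_div,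
             div_eq_iff h0]
           ring⟩
    · have h1 : b ≤ t := le_trans (by omega) hmin
      have h2 : t ≤ a := le_trans hmax (by omega)
      have hlt : (b:ℝ) < (a:ℝ) := by exact_mod_cast lt_of_le_of_ne h (Ne.symm hab)
      have h1' : (b:ℝ) ≤ (t:ℝ) := by exact_mod_cast h1
      have h2' : (t:ℝ) ≤ (a:ℝ) := by exact_mod_cast h2
      refine ⟨((t:ℝ) - b) / ((a:ℝ) - b), ((a:ℝ) - t) / ((a:ℝ) - b), 0,
        div_nonneg (by linarith) (by linarith), div_nonneg (by linarith) (by linarith),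
        le_refl 0,
        by have h0 : (a:ℝ) - b ≠ 0 := by linarith
           rw [add_zero, ← add_div, show (t:ℝ) - b + ((a:ℝ) - t) = (a:ℝ) - b from by ring,
             div_self h0],
        by show ((t:ℝ) - b) / ((a:ℝ) - b) * 0 + ((a:ℝ) - t) / ((a:ℝ) - b) * 0 + 0 * (d:ℝ) = 0
           ring,
        by show ((t:ℝ) - b) / ((a:ℝ) - b) * a + ((a:ℝ) - t) / ((a:ℝ) - b) * b + 0 * c = (t:ℝ)
           have h0 : (a:ℝ) - b ≠ 0 := by linarith
           rw [div_mul_eq_mul_div, div_mul_eq_mul_div, zero_mul, add_zero, ← add_div,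
             div_eq_iff h0]
           ring⟩

lemma latLenY_eq (a b c d : ℤ) (hab : a ≠ b) (hd : 0 < d) (T : Set (ℝ × ℝ))
    (hT : T = convexHull ℝ {((0:ℝ),(a:ℝ)), ((0:ℝ),(b:ℝ)), ((d:ℝ),(c:ℝ))}) :
    latLenY T = (b - a).natAbs := by
  unfold latLenY
  rw [hT, SY_eq a b c d hab hd, ← Finset.coe_Icc, Set.ncard_coe_finset, Int.card_Icc]
  omega

lemma boundX (a b c d : ℤ) (hab : a ≠ b) (hd : 0 < d) (T : Set (ℝ × ℝ))
    (hT : T = convexHull ℝ {((a:ℝ),(0:ℝ)), ((b:ℝ),(0:ℝ)), ((c:ℝ),(d:ℝ))}) :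
    (latLenX T : ℝ) ≤ 2 * (volume T).toReal := by
  rw [latLenX_eq a b c d hab hd T hT, hT, vol_tri]
  have e : (((b:ℝ),(0:ℝ)).1 - ((a:ℝ),(0:ℝ)).1) * (((c:ℝ),(d:ℝ)).2 - ((a:ℝ),(0:ℝ)).2) -
      (((b:ℝ),(0:ℝ)).2 - ((a:ℝ),(0:ℝ)).2) * (((c:ℝ),(d:ℝ)).1 - ((a:ℝ),(0:ℝ)).1)
      = ((b:ℝ) - a) * (d:ℝ) := by
    show ((b:ℝ) - a) * ((d:ℝ) - 0) - ((0:ℝ) - 0) * ((c:ℝ) - a) = _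
    ring
  rw [e, abs_mul, abs_of_pos (show (0:ℝ) < (d:ℝ) from by exact_mod_cast hd),
    ENNReal.toReal_ofReal (by positivity)]
  have h1 : ((b - a).natAbs : ℝ) = |(b:ℝ) - a| := by
    rw [Nat.cast_natAbs]
    push_cast
    ring_nf
  rw [h1]
  have hd1 : (1:ℝ) ≤ (d:ℝ) := by exact_mod_cast hd
  nlinarith [abs_nonneg ((b:ℝ) - a)]

lemma boundY (a b c d : ℤ) (hab : a ≠ b) (hd : 0 < d) (T : Set (ℝ × ℝ))
    (hT : T = convexHull ℝ {((0:ℝ),(a:ℝ)), ((0:ℝ),(b:ℝ)), ((d:ℝ),(c:ℝ))}) :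
    (latLenY T : ℝ) ≤ 2 * (volume T).toReal := by
  rw [latLenY_eq a b c d hab hd T hT, hT, vol_tri]
  have e : (((0:ℝ),(b:ℝ)).1 - ((0:ℝ),(a:ℝ)).1) * (((d:ℝ),(c:ℝ)).2 - ((0:ℝ),(a:ℝ)).2) -
      (((0:ℝ),(b:ℝ)).2 - ((0:ℝ),(a:ℝ)).2) * (((d:ℝ),(c:ℝ)).1 - ((0:ℝ),(a:ℝ)).1)
      = -(((b:ℝ) - a) * (d:ℝ)) := by
    show ((0:ℝ) - 0) * ((c:ℝ) - a) - ((b:ℝ) - a) * ((d:ℝ) - 0) = _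
    ring
  rw [e, abs_neg, abs_mul, abs_of_pos (show (0:ℝ) < (d:ℝ) from by exact_mod_cast hd),
    ENNReal.toReal_ofReal (by positivity)]
  have h1 : ((b - a).natAbs : ℝ) = |(b:ℝ) - a| := by
    rw [Nat.cast_natAbs]
    push_cast
    ring_nf
  rw [h1]
  have hd1 : (1:ℝ) ≤ (d:ℝ) := by exact_mod_cast hd
  nlinarith [abs_nonneg ((b:ℝ) - a)]

/-- a lattice triangle `T ⊆ ℝ²_{≥0}` not containing the origin,
with not both a side on the x-axis and a side on the y-axis, has
`2·Area(T) − ℓ_x(T) − ℓ_y(T) ≥ 0`. -/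
theorem stmt0 (P Q R : ℤ × ℤ) (p q r : ℝ × ℝ)
    (hp : p = ((P.1 : ℝ), (P.2 : ℝ))) (hq : q = ((Q.1 : ℝ), (Q.2 : ℝ)))
    (hr : r = ((R.1 : ℝ), (R.2 : ℝ)))
    (hncol : ¬ Collinear ℝ ({p, q, r} : Set (ℝ × ℝ)))
    (T : Set (ℝ × ℝ)) (hT : T = convexHull ℝ {p, q, r})
    (hpos : T ⊆ {v | 0 ≤ v.1 ∧ 0 ≤ v.2})
    (h0 : ((0 : ℝ), (0 : ℝ)) ∉ T)
    (hax : ¬ ((segment ℝ p q ⊆ {v : ℝ × ℝ | v.2 = 0} ∨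
               segment ℝ q r ⊆ {v : ℝ × ℝ | v.2 = 0} ∨
               segment ℝ r p ⊆ {v : ℝ × ℝ | v.2 = 0}) ∧
              (segment ℝ p q ⊆ {v : ℝ × ℝ | v.1 = 0} ∨
               segment ℝ q r ⊆ {v : ℝ × ℝ | v.1 = 0} ∨
               segment ℝ r p ⊆ {v : ℝ × ℝ | v.1 = 0}))) :
    0 ≤ 2 * (volume T).toReal - (latLenX T : ℝ) - (latLenY T : ℝ) := by
  subst hp hq hr
  set p : ℝ × ℝ := ((P.1 : ℝ), (P.2 : ℝ)) with hpd
  set q : ℝ × ℝ := ((Q.1 : ℝ), (Q.2 : ℝ)) with hqd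
  set r : ℝ × ℝ := ((R.1 : ℝ), (R.2 : ℝ)) with hrd
  have hPmem : p ∈ T := by rw [hT]; exact subset_convexHull ℝ _ (by simp)
  have hQmem : q ∈ T := by rw [hT]; exact subset_convexHull ℝ _ (by simp)
  have hRmem : r ∈ T := by rw [hT]; exact subset_convexHull ℝ _ (by simp)
  have hP1 : (0:ℤ) ≤ P.1 := by simpa [hpd] using (hpos hPmem).1
  have hP2 : (0:ℤ) ≤ P.2 := by simpa [hpd] using (hpos hPmem).2
  have hQ1 : (0:ℤ) ≤ Q.1 := by simpa [hqd] using (hpos hQmem).1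
  have hQ2 : (0:ℤ) ≤ Q.2 := by simpa [hqd] using (hpos hQmem).2
  have hR1 : (0:ℤ) ≤ R.1 := by simpa [hrd] using (hpos hRmem).1
  have hR2 : (0:ℤ) ≤ R.2 := by simpa [hrd] using (hpos hRmem).2
  by_cases hA : (P.2 = 0 ∧ Q.2 = 0) ∨ (Q.2 = 0 ∧ R.2 = 0) ∨ (R.2 = 0 ∧ P.2 = 0)
  · -- a side on the x-axis; hence no side on the y-axis
    have hB : ¬ ((P.1 = 0 ∧ Q.1 = 0) ∨ (Q.1 = 0 ∧ R.1 = 0) ∨ (R.1 = 0 ∧ P.1 = 0)) := by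
      intro hB
      apply hax
      constructor
      · rcases hA with ⟨h1, h2⟩ | ⟨h1, h2⟩ | ⟨h1, h2⟩
        · exact Or.inl (seg_charX.mpr ⟨by simp [hpd, h1], by simp [hqd, h2]⟩)
        · exact Or.inr (Or.inl (seg_charX.mpr ⟨by simp [hqd, h1], by simp [hrd, h2]⟩))
        · exact Or.inr (Or.inr (seg_charX.mpr ⟨by simp [hrd, h1], by simp [hpd, h2]⟩))
      · rcases hB with ⟨h1, h2⟩ | ⟨h1, h2⟩ | ⟨h1, h2⟩
        · exact Or.inl (seg_charY.mpr ⟨by simp [hpd, h1], by simp [hqd, h2]⟩)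
        · exact Or.inr (Or.inl (seg_charY.mpr ⟨by simp [hqd, h1], by simp [hrd, h2]⟩))
        · exact Or.inr (Or.inr (seg_charY.mpr ⟨by simp [hrd, h1], by simp [hpd, h2]⟩))
    have hYsub : {t : ℤ | ((0:ℝ), (t:ℝ)) ∈ T}.Subsingleton := by
      rw [hT]
      apply subsingY (hpos hPmem).1 (hpos hQmem).1 (hpos hRmem).1
      intro h
      apply hB
      rcases h with ⟨h1, h2⟩ | ⟨h1, h2⟩ | ⟨h1, h2⟩
      · exact Or.inl ⟨by simpa [hpd] using h1, by simpa [hqd] using h2⟩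
      · exact Or.inr (Or.inl ⟨by simpa [hqd] using h1, by simpa [hrd] using h2⟩)
      · exact Or.inr (Or.inr ⟨by simpa [hrd] using h1, by simpa [hpd] using h2⟩)
    have hY0 : latLenY T = 0 := by
      rcases hYsub.eq_empty_or_singleton with h | ⟨x, h⟩ <;> simp [latLenY, h]
    have hXbound : (latLenX T : ℝ) ≤ 2 * (volume T).toReal := by
      rcases hA with ⟨h1, h2⟩ | ⟨h1, h2⟩ | ⟨h1, h2⟩
      · have hne : P.1 ≠ Q.1 := by
          intro he
          exact hncol (collinear_of_eq (by rw [hpd, hqd, he, h1, h2]))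
        have hd : (0:ℤ) < R.2 := by
          rcases lt_or_eq_of_le hR2 with h | h
          · exact h
          · exact absurd (collinear_horiz (p := p) (q := q) (r := r)
              (by simp [hpd, h1]) (by simp [hqd, h2]) (by simp [hrd, ← h])) hncol
        exact boundX P.1 Q.1 R.1 R.2 hne hd T
          (by rw [hT, hpd, hqd, hrd, h1, h2]; norm_num)
      · have hne : Q.1 ≠ R.1 := by
          intro he
          refine hncol ?_
          rw [tri_rot]
          exact collinear_of_eq (by rw [hqd, hrd, he, h1, h2])
        have hd : (0:ℤ) < P.2 := by
          rcases lt_or_eq_of_le hP2 with h | h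
          · exact h
          · exact absurd (collinear_horiz (p := p) (q := q) (r := r)
              (by simp [hpd, ← h]) (by simp [hqd, h1]) (by simp [hrd, h2])) hncol
        exact boundX Q.1 R.1 P.1 P.2 hne hd T
          (by rw [hT, tri_rot, hpd, hqd, hrd, h1, h2]; norm_num)
      · have hne : R.1 ≠ P.1 := by
          intro he
          refine hncol ?_
          rw [tri_rot, tri_rot]
          exact collinear_of_eq (by rw [hrd, hpd, he, h1, h2])
        have hd : (0:ℤ) < Q.2 := by
          rcases lt_or_eq_of_le hQ2 with h | h
          · exact h
          · exact absurd (collinear_horiz (p := p) (q := q) (r := r)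
              (by simp [hpd, h2]) (by simp [hqd, ← h]) (by simp [hrd, h1])) hncol
        exact boundX R.1 P.1 Q.1 Q.2 hne hd T
          (by rw [hT, tri_rot, tri_rot, hpd, hqd, hrd, h1, h2]; norm_num)
    rw [hY0]
    push_cast
    linarith
  · -- no side on the x-axis
    have hXsub : {t : ℤ | ((t:ℝ), (0:ℝ)) ∈ T}.Subsingleton := by
      rw [hT]
      apply subsingX (hpos hPmem).2 (hpos hQmem).2 (hpos hRmem).2
      intro h
      apply hA
      rcases h with ⟨h1, h2⟩ | ⟨h1, h2⟩ | ⟨h1, h2⟩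
      · exact Or.inl ⟨by simpa [hpd] using h1, by simpa [hqd] using h2⟩
      · exact Or.inr (Or.inl ⟨by simpa [hqd] using h1, by simpa [hrd] using h2⟩)
      · exact Or.inr (Or.inr ⟨by simpa [hrd] using h1, by simpa [hpd] using h2⟩)
    have hX0 : latLenX T = 0 := by
      rcases hXsub.eq_empty_or_singleton with h | ⟨x, h⟩ <;> simp [latLenX, h]
    by_cases hB : (P.1 = 0 ∧ Q.1 = 0) ∨ (Q.1 = 0 ∧ R.1 = 0) ∨ (R.1 = 0 ∧ P.1 = 0)
    · have hYbound : (latLenY T : ℝ) ≤ 2 * (volume T).toReal := by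
        rcases hB with ⟨h1, h2⟩ | ⟨h1, h2⟩ | ⟨h1, h2⟩
        · have hne : P.2 ≠ Q.2 := by
            intro he
            exact hncol (collinear_of_eq (by rw [hpd, hqd, he, h1, h2]))
          have hd : (0:ℤ) < R.1 := by
            rcases lt_or_eq_of_le hR1 with h | h
            · exact h
            · exact absurd (collinear_vert (p := p) (q := q) (r := r)
                (by simp [hpd, h1]) (by simp [hqd, h2]) (by simp [hrd, ← h])) hncol
          exact boundY P.2 Q.2 R.2 R.1 hne hd T
            (by rw [hT, hpd, hqd, hrd, h1, h2]; norm_num)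
        · have hne : Q.2 ≠ R.2 := by
            intro he
            refine hncol ?_
            rw [tri_rot]
            exact collinear_of_eq (by rw [hqd, hrd, he, h1, h2])
          have hd : (0:ℤ) < P.1 := by
            rcases lt_or_eq_of_le hP1 with h | h
            · exact h
            · exact absurd (collinear_vert (p := p) (q := q) (r := r)
                (by simp [hpd, ← h]) (by simp [hqd, h1]) (by simp [hrd, h2])) hncol
          exact boundY Q.2 R.2 P.2 P.1 hne hd T
            (by rw [hT, tri_rot, hpd, hqd, hrd, h1, h2]; norm_num)
        · have hne : R.2 ≠ P.2 := by
            intro he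
            refine hncol ?_
            rw [tri_rot, tri_rot]
            exact collinear_of_eq (by rw [hrd, hpd, he, h1, h2])
          have hd : (0:ℤ) < Q.1 := by
            rcases lt_or_eq_of_le hQ1 with h | h
            · exact h
            · exact absurd (collinear_vert (p := p) (q := q) (r := r)
                (by simp [hpd, h2]) (by simp [hqd, ← h]) (by simp [hrd, h1])) hncol
          exact boundY R.2 P.2 Q.2 Q.1 hne hd T
            (by rw [hT, tri_rot, tri_rot, hpd, hqd, hrd, h1, h2]; norm_num)
      rw [hX0]
      push_cast
      linarith
    · have hYsub : {t : ℤ | ((0:ℝ), (t:ℝ)) ∈ T}.Subsingleton := by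
        rw [hT]
        apply subsingY (hpos hPmem).1 (hpos hQmem).1 (hpos hRmem).1
        intro h
        apply hB
        rcases h with ⟨h1, h2⟩ | ⟨h1, h2⟩ | ⟨h1, h2⟩
        · exact Or.inl ⟨by simpa [hpd] using h1, by simpa [hqd] using h2⟩
        · exact Or.inr (Or.inl ⟨by simpa [hqd] using h1, by simpa [hrd] using h2⟩)
        · exact Or.inr (Or.inr ⟨by simpa [hrd] using h1, by simpa [hpd] using h2⟩)
      have hY0 : latLenY T = 0 := by
        rcases hYsub.eq_empty_or_singleton with h | ⟨x, h⟩ <;> simp [latLenY, h]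
      rw [hX0, hY0]
      push_cast
      linarith [ENNReal.toReal_nonneg (a := volume T)]
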